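/- For any set S of q-ary sequences of length n satisfying Property A (no sequence in S is a nontrivial positive affine transformation of another sequence in S) and Property B (S contains no constant sequence), the cardinality of S is at most the cardinality of P_{q,n}, the set of sequences with minimum entry 0, maximum entry positive, and GCD of entries equal to 1. -/
import Mathlib


/-- `P_{q,n}`: q-ary sequences (`Fin n → ℕ`, entries `≤ q-1`) with minimum
entry 0, positive maximum entry, and gcd of entries equal to 1. -/
def PearsonSet (q n : ℕ) : Set (Fin n → ℕ) :=
  {x | (∀ i, x i ≤ q - 1) ∧ (∃ i, x i = 0) ∧ (∃ i, 0 < x i) ∧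
       Finset.univ.gcd x = 1}

/-- Any set `S` of q-ary sequences satisfying Property A (no sequence of `S`
is a nontrivial positive affine transform of another sequence of `S`) and
Property B (no constant sequence lies in `S`) has cardinality at most that of
`P_{q,n}`. -/
theorem stmt_6 (q n : ℕ) (hq : 2 ≤ q) (hn : 2 ≤ n)
    (S : Set (Fin n → ℕ)) (hSq : ∀ x ∈ S, ∀ i, x i ≤ q - 1)
    (hA : ∀ x ∈ S, ∀ y ∈ S, ∀ c₁ c₂ : ℝ, 0 < c₂ → (c₁, c₂) ≠ (0, 1) →
        (fun i => c₁ + c₂ * (x i : ℝ)) ≠ (fun i => (y i : ℝ)))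
    (hB : ∀ c : ℕ, (fun _ : Fin n => c) ∉ S) :
    S.ncard ≤ (PearsonSet q n).ncard := by
  haveI : Nonempty (Fin n) := ⟨⟨0, by omega⟩⟩
  have hu : (Finset.univ : Finset (Fin n)).Nonempty := Finset.univ_nonempty
  set m : (Fin n → ℕ) → ℕ := fun x => Finset.univ.inf' hu x with hm_def
  set g : (Fin n → ℕ) → ℕ := fun x => Finset.univ.gcd (fun i => x i - m x) with hg_def
  set F : (Fin n → ℕ) → (Fin n → ℕ) := fun x i => (x i - m x) / g x with hF_def
  -- basic facts for x ∈ S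
  have hmle : ∀ x : Fin n → ℕ, ∀ i, m x ≤ x i := fun x i =>
    Finset.inf'_le x (Finset.mem_univ i)
  have hmmem : ∀ x : Fin n → ℕ, ∃ i, x i = m x := by
    intro x
    obtain ⟨i, _, hi⟩ := Finset.exists_mem_eq_inf' hu x
    exact ⟨i, hi.symm⟩
  have hdvd : ∀ x : Fin n → ℕ, ∀ i, g x ∣ x i - m x := fun x i =>
    Finset.gcd_dvd (Finset.mem_univ i)
  have hnc : ∀ x ∈ S, ∃ i, x i ≠ m x := by
    intro x hx
    by_contra h
    push_neg at h
    exact hB (m x) (by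
      have : x = fun _ => m x := funext h
      rwa [this] at hx)
  have hg0 : ∀ x ∈ S, 0 < g x := by
    intro x hx
    rcases Nat.eq_zero_or_pos (g x) with h | h
    · obtain ⟨i, hi⟩ := hnc x hx
      have := Finset.gcd_eq_zero_iff.mp h i (Finset.mem_univ i)
      exact absurd (le_antisymm (by omega) (hmle x i)) hi
    · exact h
  -- the key real identity
  have hreal : ∀ x ∈ S, ∀ i, (x i : ℝ) = m x + g x * F x i := by
    intro x hx i
    have h1 : g x * F x i = x i - m x := Nat.mul_div_cancel' (hdvd x i)
    have h2 : m x + (x i - m x) = x i := Nat.add_sub_cancel' (hmle x i)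
    have : (m x + g x * F x i : ℕ) = x i := by rw [h1, h2]
    exact_mod_cast this.symm
  -- F maps S into PearsonSet
  have hmaps : ∀ x ∈ S, F x ∈ PearsonSet q n := by
    intro x hx
    refine ⟨fun i => le_trans (Nat.div_le_self _ _)
      (le_trans (Nat.sub_le _ _) (hSq x hx i)), ?_, ?_, ?_⟩
    · obtain ⟨i, hi⟩ := hmmem x
      exact ⟨i, by simp [hF_def, hi]⟩
    · obtain ⟨i, hi⟩ := hnc x hx
      have hpos : 0 < x i - m x := by have := hmle x i; omega
      exact ⟨i, Nat.div_pos (Nat.le_of_dvd hpos (hdvd x i)) (hg0 x hx)⟩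
    · obtain ⟨i, hi⟩ := hnc x hx
      have hpos : x i - m x ≠ 0 := by have := hmle x i; omega
      exact Finset.gcd_div_eq_one (Finset.mem_univ i) hpos
  -- injectivity
  have hinj : Set.InjOn F S := by
    intro x hx y hy hxy
    set c₂ : ℝ := (g y : ℝ) / (g x : ℝ) with hc₂
    set c₁ : ℝ := (m y : ℝ) - c₂ * m x with hc₁
    have hgx : (0:ℝ) < g x := by exact_mod_cast hg0 x hx
    have hgy : (0:ℝ) < g y := by exact_mod_cast hg0 y hy
    have hc₂pos : 0 < c₂ := div_pos hgy hgx
    have heq : (fun i => c₁ + c₂ * (x i : ℝ)) = fun i => (y i : ℝ) := by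
      funext i
      have h1 := hreal x hx i
      have h2 := hreal y hy i
      rw [h1, h2, hc₁, hc₂]
      have : F x i = F y i := congrFun hxy i
      rw [this]
      field_simp
      ring
    by_cases htriv : (c₁, c₂) = ((0 : ℝ), (1 : ℝ))
    · have hc1 : c₁ = 0 := (Prod.ext_iff.mp htriv).1
      have hc2 : c₂ = 1 := (Prod.ext_iff.mp htriv).2
      funext i
      have := congrFun heq i
      rw [hc1, hc2] at this
      simp at this
      exact_mod_cast this
    · exact absurd heq (hA x hx y hy c₁ c₂ hc₂pos htriv)
  -- finiteness of PearsonSet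
  have hfin : (PearsonSet q n).Finite := by
    apply Set.Finite.subset (Set.Finite.pi (fun _ : Fin n => Set.finite_Iic (q - 1)))
    intro x hx i _
    exact hx.1 i
  exact Set.ncard_le_ncard_of_injOn F hmaps hinj hfin
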